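/- Let h : ℝⁿ → ℝ ∪ {+∞} be a proper, lower semicontinuous convex function of Legendre type with C = int dom h, let 𝒜 = {x : Ax = b} be an affine subspace with direction 𝒜₀ = ker A such that F = C ∩ 𝒜 ≠ ∅, and let Π_{𝒜₀} denote the Euclidean orthogonal projection onto 𝒜₀. Then for every sequence (xʲ) ⊂ F converging to a point x* ∈ (bd C) ∩ 𝒜, one has ‖Π_{𝒜₀} ∇h(xʲ)‖ → ∞. Consequently, the restriction of h to 𝒜 (precomposed with any invertible affine parametrization T : ℝ^{n−m} → 𝒜) is a proper lower semicontinuous convex function of Legendre type on ℝ^{n−m} whose domain has interior T⁻¹(F). -/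

import Mathlib

noncomputable section
open Set Filter Topology Matrix
open scoped RealInnerProductSpace

abbrev E (n : ℕ) := EuclideanSpace ℝ (Fin n)

/-- A proper lower semicontinuous convex function (modelled by its finite values `g` and
its effective domain `dom`) is of *Legendre type* if it is (lsc, convex and) essentially
smooth — differentiable on `int dom` with gradient blowing up along sequences of
`int dom` approaching the boundary of `dom` — and strictly convex on `int dom`. -/
def IsLegendreType {r : ℕ} (g : E r → ℝ) (dom : Set (E r)) : Prop :=
  dom.Nonempty ∧ Convex ℝ dom ∧ ConvexOn ℝ dom g ∧ LowerSemicontinuousOn g dom ∧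
  DifferentiableOn ℝ g (interior dom) ∧ StrictConvexOn ℝ (interior dom) g ∧
  ∀ (z : ℕ → E r) (xstar : E r), (∀ j, z j ∈ interior dom) → xstar ∈ frontier dom →
    Tendsto z atTop (𝓝 xstar) →
    Tendsto (fun j => ‖gradient g (z j)‖) atTop atTop

/-- The basic gradient inequality for a convex function at a point of differentiability. -/
lemma gradIneq {r : ℕ} {f : E r → ℝ} {s : Set (E r)} (hf : ConvexOn ℝ s f)
    {x y : E r} (hx : x ∈ s) (hy : y ∈ s) (hd : DifferentiableAt ℝ f x) :
    ⟪gradient f x, y - x⟫ ≤ f y - f x := by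
  set g : ℝ → ℝ := fun t => f (x + t • (y - x)) with hg
  have hder : HasDerivAt g (fderiv ℝ f x (y - x)) 0 := by
    have h2 : HasDerivAt (fun t : ℝ => x + t • (y - x)) (y - x) 0 := by
      simpa using ((hasDerivAt_id (0:ℝ)).smul_const (y - x)).const_add x
    have h1 : HasFDerivAt f (fderiv ℝ f x) (x + (0:ℝ) • (y - x)) := by
      simpa using hd.hasFDerivAt
    exact (h1.comp_hasDerivAt 0 h2)
  have hsl : Tendsto (slope g 0) (𝓝[>] 0) (𝓝 (fderiv ℝ f x (y - x))) :=
    (hasDerivAt_iff_tendsto_slope.1 hder).mono_left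
      (nhdsWithin_mono 0 (fun t (ht : t ∈ Ioi 0) => Set.mem_compl_singleton_iff.2 ht.ne'))
  have hev : ∀ᶠ t : ℝ in 𝓝[>] 0, slope g 0 t ≤ f y - f x := by
    filter_upwards [Ioc_mem_nhdsGT (zero_lt_one (α := ℝ))] with t ht
    have hcx : f ((1 - t) • x + t • y) ≤ (1 - t) * f x + t * f y :=
      hf.2 hx hy (by linarith [ht.2]) ht.1.le (by ring)
    have hxe : x + t • (y - x) = (1 - t) • x + t • y := by module
    rw [slope_def_field]
    have hg0 : g 0 = f x := by simp [hg]
    have hgt : g t = f ((1 - t) • x + t • y) := by rw [hg]; simp only; rw [hxe]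
    rw [hg0, hgt, div_le_iff₀ (by simpa using ht.1)]
    nlinarith [hcx]
  have hfin := le_of_tendsto hsl hev
  have hgrad : (⟪gradient f x, y - x⟫ : ℝ) = fderiv ℝ f x (y - x) :=
    InnerProductSpace.toDual_symm_apply
  rw [hgrad]; exact hfin

lemma closure_sub_closure_interior {r : ℕ} {s : Set (E r)} (hs : Convex ℝ s)
    {y0 : E r} (hy0 : y0 ∈ interior s) : closure s ⊆ closure (interior s) := by
  intro x hx
  have htend : Tendsto (fun t : ℝ => (1 - t) • x + t • y0) (𝓝[>] 0) (𝓝 x) := by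
    have hc : Continuous (fun t : ℝ => (1 - t) • x + t • y0) := by continuity
    have h0 : Tendsto (fun t : ℝ => (1 - t) • x + t • y0) (𝓝 0) (𝓝 x) := by
      have := hc.tendsto 0
      simpa using this
    exact h0.mono_left nhdsWithin_le_nhds
  refine mem_closure_of_tendsto htend ?_
  filter_upwards [Ioc_mem_nhdsGT (zero_lt_one (α := ℝ))] with t ht
  exact hs.combo_closure_interior_mem_interior hx hy0 (by linarith [ht.2]) ht.1 (by ring)

lemma frontier_interior_sub {r : ℕ} {s : Set (E r)} :
    frontier (interior s) ⊆ frontier s := by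
  intro x hx
  exact ⟨closure_mono interior_subset hx.1, by
    have := hx.2; rwa [interior_interior] at this⟩

set_option maxHeartbeats 1000000 in
/-- The projected gradient blows up at boundary points of `C` lying on the affine set. -/
lemma key (n m : ℕ) (A : Matrix (Fin m) (Fin n) ℝ) (b : Fin m → ℝ)
    (h : E n → ℝ) (domh : Set (E n)) (hLeg : IsLegendreType h domh)
    (hFne : (interior domh ∩ {x | A.mulVec x = b}).Nonempty) :
    ∀ (z : ℕ → E n) (xstar : E n),
      (∀ j, z j ∈ interior domh ∩ {x | A.mulVec x = b}) →
      xstar ∈ frontier (interior domh) → A.mulVec xstar = b →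
      Tendsto z atTop (𝓝 xstar) →
      Tendsto (fun j =>
        ‖((Submodule.orthogonalProjectionOnto (LinearMap.ker (Matrix.toEuclideanLin A))
            (gradient h (z j)) : E n))‖) atTop atTop := by
  obtain ⟨-, hdconv, hconvOn, -, hdiff, -, hblow⟩ := hLeg
  intro z xstar hzF hxfr hxA hzt
  set K := LinearMap.ker (Matrix.toEuclideanLin A) with hK
  have hKmem : ∀ v : E n, v ∈ K ↔ A.mulVec v = 0 := fun _ => by simp [K, Matrix.toEuclideanLin_apply]
  obtain ⟨y0, hy0i, hy0A⟩ := hFne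
  obtain ⟨ε, hε, hball⟩ : ∃ ε > 0, Metric.closedBall y0 ε ⊆ interior domh :=
    Metric.nhds_basis_closedBall.mem_iff.1 (isOpen_interior.mem_nhds hy0i)
  obtain ⟨M, hM⟩ : ∃ M, ∀ x ∈ Metric.closedBall y0 ε, h x ≤ M := by
    obtain ⟨C, hC⟩ := (isCompact_closedBall y0 ε).exists_bound_of_continuousOn
      (hdiff.continuousOn.mono hball)
    exact ⟨C, fun x hx => (le_abs_self _).trans (by simpa using hC x hx)⟩
  have hwt : Tendsto (fun j => ‖gradient h (z j)‖) atTop atTop :=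
    hblow z xstar (fun j => (hzF j).1) (frontier_interior_sub hxfr) hzt
  have hdz : ∀ j, DifferentiableAt ℝ h (z j) := fun j =>
    (hdiff _ (hzF j).1).differentiableAt (isOpen_interior.mem_nhds (hzF j).1)
  have hdy0 : DifferentiableAt ℝ h y0 :=
    (hdiff _ hy0i).differentiableAt (isOpen_interior.mem_nhds hy0i)
  set g0 := gradient h y0 with hg0
  have main : ∀ j, ε * ‖gradient h (z j) - (Submodule.orthogonalProjectionOnto K (gradient h (z j)) : E n)‖
      ≤ (M - h y0 - ⟪g0, z j - y0⟫)
        + ‖(Submodule.orthogonalProjectionOnto K (gradient h (z j)) : E n)‖ * ‖y0 - z j‖ := by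
    intro j
    set w := gradient h (z j) with hw
    set p := (Submodule.orthogonalProjectionOnto K w : E n) with hp
    set q := w - p with hq
    set u := ‖q‖⁻¹ • q with hu
    have hqK : q ∈ Kᗮ := Submodule.sub_starProjection_mem_orthogonal (K := K) w
    have hpK : p ∈ K := (Submodule.orthogonalProjectionOnto K w).2
    have hun : ‖u‖ ≤ 1 := by
      rcases eq_or_ne q 0 with h0 | h0
      · simp [hu, h0]
      · rw [hu, norm_smul, norm_inv, norm_norm, inv_mul_cancel₀ (norm_ne_zero_iff.2 h0)]
    have hy : y0 + ε • u ∈ domh := by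
      refine interior_subset (hball ?_)
      rw [Metric.mem_closedBall, dist_eq_norm]
      have hne : ‖y0 + ε • u - y0‖ = ε * ‖u‖ := by
        simp [norm_smul, abs_of_pos hε]
      rw [hne]
      nlinarith
    have h1 : ⟪w, (y0 + ε • u) - z j⟫ ≤ h (y0 + ε • u) - h (z j) :=
      gradIneq hconvOn (interior_subset (hzF j).1) hy (hdz j)
    have hsplit : (y0 + ε • u) - z j = (y0 - z j) + ε • u := by module
    have hmemK : y0 - z j ∈ K := by
      rw [hKmem]
      have h2 := (hzF j).2
      simp only [Set.mem_setOf_eq] at h2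
      rw [WithLp.ofLp_sub, Matrix.mulVec_sub, hy0A, h2, sub_self]
    have hq0 : ⟪q, y0 - z j⟫ = 0 := by
      have := (Submodule.mem_orthogonal K q).1 hqK (y0 - z j) hmemK
      rwa [real_inner_comm] at this
    have hpq : ⟪p, q⟫ = 0 := (Submodule.mem_orthogonal K q).1 hqK p hpK
    have hwq : ⟪w, q⟫ = ‖q‖ ^ 2 := by
      have hw' : w = p + q := by rw [hq]; abel
      rw [hw', inner_add_left, hpq, real_inner_self_eq_norm_sq]
      ring
    have hwu : ⟪w, u⟫ = ‖q‖ := by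
      rcases eq_or_ne q 0 with h0 | h0
      · simp [hu, h0]
      · rw [hu, real_inner_smul_right, hwq, sq, inv_mul_cancel_left₀ (norm_ne_zero_iff.2 h0)]
    have hinner : ⟪w, (y0 + ε • u) - z j⟫ = ⟪p, y0 - z j⟫ + ε * ‖q‖ := by
      rw [hsplit, inner_add_right, real_inner_smul_right, hwu]
      congr 1
      have hw' : w = p + q := by rw [hq]; abel
      rw [hw', inner_add_left, hq0, add_zero]
    have hlow : h y0 + ⟪g0, z j - y0⟫ ≤ h (z j) := by
      have := gradIneq hconvOn (interior_subset hy0i) (interior_subset (hzF j).1) hdy0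
      linarith
    have habs := abs_real_inner_le_norm p (y0 - z j)
    have hMy : h (y0 + ε • u) ≤ M := hM _ (by
      rw [Metric.mem_closedBall, dist_eq_norm]
      have hne : ‖y0 + ε • u - y0‖ = ε * ‖u‖ := by simp [norm_smul, abs_of_pos hε]
      rw [hne]; nlinarith)
    rw [hinner] at h1
    have habs' := abs_le.1 habs
    linarith [habs'.1, habs'.2]
  rw [tendsto_atTop]
  intro c
  set b' := max c 0 with hb'
  have hb0 : (0:ℝ) ≤ b' := le_max_right _ _
  have hI : Tendsto (fun j => (⟪g0, z j - y0⟫ : ℝ)) atTop (𝓝 ⟪g0, xstar - y0⟫) := by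
    have hc : Continuous (fun v : E n => (⟪g0, v - y0⟫ : ℝ)) :=
      continuous_const.inner (continuous_id.sub continuous_const)
    exact (hc.tendsto xstar).comp hzt
  have hR : Tendsto (fun j => ‖y0 - z j‖) atTop (𝓝 ‖y0 - xstar‖) := by
    have hc : Continuous (fun v : E n => ‖y0 - v‖) :=
      (continuous_const.sub continuous_id).norm
    exact (hc.tendsto xstar).comp hzt
  set I := (⟪g0, xstar - y0⟫ : ℝ)
  set R := ‖y0 - xstar‖
  set D := M - h y0 - (I - 1) + b' * (R + 1) with hD
  filter_upwards [hI.eventually (eventually_gt_nhds (show I - 1 < I by linarith)),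
    hR.eventually (eventually_lt_nhds (show R < R + 1 by linarith)),
    hwt.eventually_ge_atTop (b' + D / ε + 1)] with j hIj hRj hwj
  by_contra hcon
  push_neg at hcon
  have hpb : ‖(Submodule.orthogonalProjectionOnto K (gradient h (z j)) : E n)‖ ≤ b' := by
    calc ‖(Submodule.orthogonalProjectionOnto K (gradient h (z j)) : E n)‖ ≤ c := le_of_lt hcon
      _ ≤ b' := le_max_left _ _
  set p := (Submodule.orthogonalProjectionOnto K (gradient h (z j)) : E n)
  set q := gradient h (z j) - p with hqd
  have hmj := main j
  have hqb : ε * ‖q‖ ≤ D := by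
    have h1 : ‖p‖ * ‖y0 - z j‖ ≤ b' * (R + 1) := by
      have := norm_nonneg (y0 - z j)
      nlinarith
    rw [hD]
    have h2 : M - h y0 - ⟪g0, z j - y0⟫ ≤ M - h y0 - (I - 1) := by linarith
    linarith
  have hwn : ‖gradient h (z j)‖ ≤ ‖p‖ + ‖q‖ := by
    have h3 : gradient h (z j) = p + q := by rw [hqd]; abel
    rw [h3]; exact norm_add_le _ _
  have hqD : ‖q‖ ≤ D / ε := (le_div_iff₀ hε).2 (by linarith)
  linarith
set_option maxHeartbeats 1600000 in
/-- Proposition `P:leg-trans2`.  Let `h` be of Legendre type with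
`C = int dom h`, `𝒜 = {x : Ax = b}` with `F = C ∩ 𝒜 ≠ ∅`, and `Π` the orthogonal
projection onto `𝒜₀ = ker A`.  Then `‖Π ∇h(xʲ)‖ → ∞` for every sequence of `F`
converging to a point of `(bd C) ∩ 𝒜`; consequently, for any invertible affine
parametrization `T : ℝ^{n−m} → 𝒜`, `h ∘ T` is of Legendre type with
`int dom (h∘T) = T⁻¹(F)`. -/
theorem stmt18 (n m : ℕ) (hm : 0 < m) (hmn : m < n)
    (A : Matrix (Fin m) (Fin n) ℝ) (hrank : A.rank = m) (b : Fin m → ℝ)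
    (h : E n → ℝ) (domh : Set (E n))
    (hLeg : IsLegendreType h domh)
    (hFne : (interior domh ∩ {x | A.mulVec x = b}).Nonempty) :
    -- the projected gradient blows up at boundary points of `C` lying on `𝒜`
    (∀ (z : ℕ → E n) (xstar : E n),
      (∀ j, z j ∈ interior domh ∩ {x | A.mulVec x = b}) →
      xstar ∈ frontier (interior domh) → A.mulVec xstar = b →
      Tendsto z atTop (𝓝 xstar) →
      Tendsto (fun j =>
        ‖((Submodule.orthogonalProjectionOnto (LinearMap.ker (Matrix.toEuclideanLin A))
            (gradient h (z j)) : E n))‖) atTop atTop) ∧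
    -- consequently `h∘T` is of Legendre type on `ℝ^{n−m}`, with
    -- `int dom (h∘T) = T⁻¹(F)`, for any invertible affine parametrization `T` of `𝒜`
    (∀ (Lp : E (n - m) →ₗ[ℝ] E n) (w0 : E n), Function.Injective Lp →
      LinearMap.range Lp = LinearMap.ker (Matrix.toEuclideanLin A) →
      A.mulVec w0 = b →
      IsLegendreType (fun z => h (Lp z + w0)) ((fun z => Lp z + w0) ⁻¹' domh) ∧
      interior ((fun z => Lp z + w0) ⁻¹' domh) =
        (fun z => Lp z + w0) ⁻¹' (interior domh ∩ {x | A.mulVec x = b})) := by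
  have hkey := key n m A b h domh hLeg hFne
  refine ⟨hkey, ?_⟩
  intro Lp w0 hinj hrange hw0
  obtain ⟨hdne, hdconv, hconvOn, hlsc, hdiff, hstrict, hblow⟩ := hLeg
  obtain ⟨y0, hy0i, hy0A'⟩ := hFne
  have hy0A : A.mulVec y0 = b := hy0A'
  set K := LinearMap.ker (Matrix.toEuclideanLin A) with hKdef
  have hKmem : ∀ v : E n, v ∈ K ↔ A.mulVec v = 0 := fun _ => by simp [K, Matrix.toEuclideanLin_apply]
  -- basic facts about the affine parametrization
  have hTA : ∀ z : E (n - m), A.mulVec (Lp z + w0) = b := by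
    intro z
    have h1 : Lp z ∈ K := hrange ▸ LinearMap.mem_range_self Lp z
    have h2 : A.mulVec (Lp z) = 0 := (hKmem _).1 h1
    rw [Matrix.mulVec_add, h2, hw0, zero_add]
  have hcontT : Continuous (fun z : E (n - m) => Lp z + w0) :=
    (Lp.continuous_of_finiteDimensional).add continuous_const
  have haff : ∀ (a b' : ℝ), a + b' = 1 → ∀ z1 z2 : E (n - m),
      Lp (a • z1 + b' • z2) + w0 = a • (Lp z1 + w0) + b' • (Lp z2 + w0) := by
    intro a b' hab z1 z2
    have hb' : b' = 1 - a := by linarith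
    subst hb'
    rw [map_add, LinearMap.map_smul, LinearMap.map_smul]
    module
  have hmemA : ∀ x : E n, A.mulVec x = b → ∃ u, Lp u + w0 = x := by
    intro x hx
    have h1 : x - w0 ∈ LinearMap.range Lp := by
      rw [hrange, hKmem, WithLp.ofLp_sub, Matrix.mulVec_sub, hx, hw0, sub_self]
    obtain ⟨u, hu⟩ := h1
    exact ⟨u, by rw [hu]; abel⟩
  have hsub1 : (fun z : E (n - m) => Lp z + w0) ⁻¹' (interior domh) ⊆
      interior ((fun z : E (n - m) => Lp z + w0) ⁻¹' domh) :=
    interior_maximal (Set.preimage_mono interior_subset) (isOpen_interior.preimage hcontT)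
  -- the interior identity
  have hIntEq : interior ((fun z : E (n - m) => Lp z + w0) ⁻¹' domh) =
      (fun z : E (n - m) => Lp z + w0) ⁻¹' (interior domh ∩ {x | A.mulVec x = b}) := by
    apply Subset.antisymm
    · intro z hz
      refine ⟨?_, hTA z⟩
      show Lp z + w0 ∈ interior domh
      rcases eq_or_ne (Lp z + w0) y0 with he | hne
      · exact he ▸ hy0i
      · obtain ⟨u, hu⟩ : ∃ u, Lp u = (Lp z + w0) - y0 := by
          have h1 : (Lp z + w0) - y0 ∈ LinearMap.range Lp := by
            rw [hrange, hKmem, WithLp.ofLp_sub, Matrix.mulVec_sub, sub_eq_zero, hy0A]; exact hTA z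
          exact h1
        obtain ⟨δ, hδ, hballz⟩ : ∃ δ > 0,
            Metric.ball z δ ⊆ (fun z : E (n - m) => Lp z + w0) ⁻¹' domh := by
          obtain ⟨δ, hδ, hb⟩ := Metric.mem_nhds_iff.1 (isOpen_interior.mem_nhds hz)
          exact ⟨δ, hδ, hb.trans interior_subset⟩
        have hu0 : u ≠ 0 := by
          intro h0
          apply hne
          have h1 : Lp u = 0 := by rw [h0, map_zero]
          rw [h1] at hu
          exact (sub_eq_zero.1 hu.symm)
        have hun : (0:ℝ) < ‖u‖ := norm_pos_iff.2 hu0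
        set t := δ / (2 * ‖u‖) with ht
        have htpos : 0 < t := div_pos hδ (by positivity)
        have hz' : z + t • u ∈ (fun z : E (n - m) => Lp z + w0) ⁻¹' domh := by
          apply hballz
          rw [Metric.mem_ball, dist_eq_norm]
          have h2 : ‖z + t • u - z‖ = t * ‖u‖ := by simp [norm_smul, abs_of_pos htpos]
          rw [h2, ht]
          rw [div_mul_eq_mul_div, mul_comm]
          rw [div_lt_iff₀ (by positivity)]
          nlinarith
        have hx' : (Lp z + w0) + t • ((Lp z + w0) - y0) ∈ domh := by
          have h3 : Lp (z + t • u) + w0 = (Lp z + w0) + t • ((Lp z + w0) - y0) := by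
            rw [map_add, LinearMap.map_smul, hu]
            abel
          rw [← h3]
          exact hz'
        have hcombo : Lp z + w0 = (t/(1+t)) • y0
            + (1/(1+t)) • ((Lp z + w0) + t • ((Lp z + w0) - y0)) := by
          have h1t : (1:ℝ) + t ≠ 0 := by positivity
          match_scalars <;> field_simp <;> ring
        have hmem := hdconv.combo_interior_closure_mem_interior hy0i (subset_closure hx')
          (a := t/(1+t)) (b := 1/(1+t)) (by positivity) (by positivity)
          (by field_simp; ring)
        rwa [← hcombo] at hmem
    · intro z hz
      exact hsub1 hz.1
  have hmemInt : ∀ {z : E (n - m)}, z ∈ interior ((fun z : E (n - m) => Lp z + w0) ⁻¹' domh) →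
      Lp z + w0 ∈ interior domh ∩ {x | A.mulVec x = b} :=
    fun {z} hz => (Set.ext_iff.1 hIntEq z).1 hz
  have hmemInt' : ∀ {z : E (n - m)}, Lp z + w0 ∈ interior domh ∩ {x | A.mulVec x = b} →
      z ∈ interior ((fun z : E (n - m) => Lp z + w0) ⁻¹' domh) :=
    fun {z} hz => (Set.ext_iff.1 hIntEq z).2 hz
  refine ⟨⟨?_, ?_, ?_, ?_, ?_, ?_, ?_⟩, hIntEq⟩
  -- nonempty
  · obtain ⟨u, hu⟩ := hmemA y0 hy0A
    exact ⟨u, show Lp u + w0 ∈ domh from hu ▸ interior_subset hy0i⟩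
  -- convex
  · intro z1 h1 z2 h2 a b' ha hb hab
    show Lp (a • z1 + b' • z2) + w0 ∈ domh
    rw [haff a b' hab]
    exact hdconv h1 h2 ha hb hab
  -- convexOn
  · refine ⟨?_, ?_⟩
    · intro z1 h1 z2 h2 a b' ha hb hab
      show Lp (a • z1 + b' • z2) + w0 ∈ domh
      rw [haff a b' hab]
      exact hdconv h1 h2 ha hb hab
    · intro z1 h1 z2 h2 a b' ha hb hab
      show h (Lp (a • z1 + b' • z2) + w0) ≤ _
      rw [haff a b' hab]
      exact hconvOn.2 h1 h2 ha hb hab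
  -- lsc
  · intro z hz c hc
    have hev := hlsc (Lp z + w0) hz c hc
    have htt : Tendsto (fun z : E (n - m) => Lp z + w0)
        (𝓝[(fun z : E (n - m) => Lp z + w0) ⁻¹' domh] z) (𝓝[domh] (Lp z + w0)) :=
      hcontT.continuousWithinAt.tendsto_nhdsWithin (fun x hx => hx)
    exact htt.eventually hev
  -- differentiableOn
  · intro z hz
    have hzi := hmemInt hz
    have hdT : DifferentiableAt ℝ h (Lp z + w0) :=
      (hdiff _ hzi.1).differentiableAt (isOpen_interior.mem_nhds hzi.1)
    have hTd : DifferentiableAt ℝ (fun z : E (n - m) => Lp z + w0) z :=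
      ((LinearMap.toContinuousLinearMap Lp).differentiableAt).add_const w0
    exact (hdT.comp z hTd).differentiableWithinAt
  -- strictConvexOn
  · refine ⟨Convex.interior ?_, ?_⟩
    · intro z1 h1 z2 h2 a b' ha hb hab
      show Lp (a • z1 + b' • z2) + w0 ∈ domh
      rw [haff a b' hab]
      exact hdconv h1 h2 ha hb hab
    · intro z1 h1 z2 h2 hne a b' ha hb hab
      have h1' := hmemInt h1
      have h2' := hmemInt h2
      have hne' : Lp z1 + w0 ≠ Lp z2 + w0 := by
        intro hc
        exact hne (hinj (by simpa using hc))
      show h (Lp (a • z1 + b' • z2) + w0) < _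
      rw [haff a b' hab]
      exact hstrict.2 h1'.1 h2'.1 hne' ha hb hab
  -- blow-up
  · intro zs xs hzsi hxsf hzst
    have hTz : ∀ j, Lp (zs j) + w0 ∈ interior domh ∩ {x | A.mulVec x = b} :=
      fun j => hmemInt (hzsi j)
    have hclos : Lp xs + w0 ∈ closure domh := by
      have h1 : xs ∈ closure ((fun z : E (n - m) => Lp z + w0) ⁻¹' domh) := hxsf.1
      exact (hcontT.closure_preimage_subset domh) h1
    have hfr : Lp xs + w0 ∈ frontier (interior domh) := by
      constructor
      · exact closure_sub_closure_interior hdconv hy0i hclos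
      · rw [interior_interior]
        intro hcon
        exact hxsf.2 (hmemInt' ⟨hcon, hTA xs⟩)
    have hTzs : Tendsto (fun j => Lp (zs j) + w0) atTop (𝓝 (Lp xs + w0)) :=
      (hcontT.tendsto xs).comp hzst
    have hPj := hkey (fun j => Lp (zs j) + w0) (Lp xs + w0) hTz hfr (hTA xs) hTzs
    -- bounded-below constant for `Lp`
    obtain ⟨c, hcpos, hcb⟩ : ∃ c : ℝ, 0 < c ∧ ∀ u : E (n - m), ‖u‖ ≤ c * ‖Lp u‖ := by
      set e0 := LinearEquiv.ofInjective Lp hinj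
      set e := e0.toContinuousLinearEquiv
      set S : (LinearMap.range Lp) →L[ℝ] E (n - m) := ↑e.symm
      refine ⟨max ‖S‖ 1, lt_of_lt_of_le one_pos (le_max_right _ _), ?_⟩
      intro u
      have h1 : u = e.symm (e u) := (e.symm_apply_apply u).symm
      have h2 : ‖e.symm (e u)‖ ≤ ‖S‖ * ‖e u‖ := S.le_opNorm _
      have h3 : ‖e u‖ = ‖Lp u‖ := by
        have h4 : ((e u : LinearMap.range Lp) : E n) = Lp u := rfl
        rw [show ‖e u‖ = ‖((e u : LinearMap.range Lp) : E n)‖ from rfl, h4]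
      calc ‖u‖ = ‖e.symm (e u)‖ := by rw [← h1]
        _ ≤ ‖S‖ * ‖e u‖ := h2
        _ ≤ max ‖S‖ 1 * ‖Lp u‖ := by rw [h3]; gcongr; exact le_max_left _ _
    -- pointwise comparison of gradients
    have hgl : ∀ j, ‖(Submodule.orthogonalProjectionOnto K (gradient h (Lp (zs j) + w0)) : E n)‖
        ≤ c * ‖gradient (fun z : E (n - m) => h (Lp z + w0)) (zs j)‖ := by
      intro j
      set G := gradient h (Lp (zs j) + w0) with hG
      set pp := (Submodule.orthogonalProjectionOnto K G : E n) with hpp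
      have hppK : pp ∈ K := (Submodule.orthogonalProjectionOnto K G).2
      have hppR : pp ∈ LinearMap.range Lp := by rw [hrange]; exact hppK
      obtain ⟨u0, hu0⟩ : ∃ u0, Lp u0 = pp := hppR
      have hdT : DifferentiableAt ℝ h (Lp (zs j) + w0) :=
        (hdiff _ (hTz j).1).differentiableAt (isOpen_interior.mem_nhds (hTz j).1)
      have hfd : HasFDerivAt (fun z : E (n - m) => h (Lp z + w0))
          ((fderiv ℝ h (Lp (zs j) + w0)).comp (LinearMap.toContinuousLinearMap Lp)) (zs j) := by
        have hT1 : HasFDerivAt (fun z : E (n - m) => Lp z + w0)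
            (LinearMap.toContinuousLinearMap Lp) (zs j) :=
          ((LinearMap.toContinuousLinearMap Lp).hasFDerivAt).add_const w0
        exact hdT.hasFDerivAt.comp (zs j) hT1
      have hginner : (⟪gradient (fun z : E (n - m) => h (Lp z + w0)) (zs j), u0⟫ : ℝ)
          = ⟪G, Lp u0⟫ := by
        have hL : (⟪gradient (fun z : E (n - m) => h (Lp z + w0)) (zs j), u0⟫ : ℝ)
            = fderiv ℝ (fun z : E (n - m) => h (Lp z + w0)) (zs j) u0 :=
          InnerProductSpace.toDual_symm_apply
        have hR : (⟪G, Lp u0⟫ : ℝ) = fderiv ℝ h (Lp (zs j) + w0) (Lp u0) :=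
          InnerProductSpace.toDual_symm_apply
        rw [hL, hR, hfd.fderiv]
        rfl
      have hGpp : (⟪G, Lp u0⟫ : ℝ) = ‖pp‖ ^ 2 := by
        rw [hu0]
        have hG' : G = pp + (G - pp) := by abel
        have horth : (⟪G - pp, pp⟫ : ℝ) = 0 := by
          have hq := Submodule.sub_starProjection_mem_orthogonal (K := K) G
          have := (Submodule.mem_orthogonal K (G - pp)).1 hq pp hppK
          rwa [real_inner_comm] at this
        calc (⟪G, pp⟫ : ℝ) = ⟪pp + (G - pp), pp⟫ := by rw [← hG']
          _ = ⟪pp, pp⟫ + ⟪G - pp, pp⟫ := inner_add_left _ _ _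
          _ = ‖pp‖ ^ 2 := by rw [horth, add_zero, real_inner_self_eq_norm_sq]
      have hbound : ‖pp‖ ^ 2 ≤ ‖gradient (fun z : E (n - m) => h (Lp z + w0)) (zs j)‖
          * (c * ‖pp‖) := by
        calc ‖pp‖ ^ 2 = (⟪gradient (fun z : E (n - m) => h (Lp z + w0)) (zs j), u0⟫ : ℝ) := by
              rw [hginner, hGpp]
          _ ≤ ‖gradient (fun z : E (n - m) => h (Lp z + w0)) (zs j)‖ * ‖u0‖ :=
              real_inner_le_norm _ _
          _ ≤ ‖gradient (fun z : E (n - m) => h (Lp z + w0)) (zs j)‖ * (c * ‖pp‖) :=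
              mul_le_mul_of_nonneg_left (by rw [← hu0]; exact hcb u0) (norm_nonneg _)
      rcases eq_or_lt_of_le (norm_nonneg pp) with h0 | h0
      · rw [← h0]
        positivity
      · nlinarith [norm_nonneg (gradient (fun z : E (n - m) => h (Lp z + w0)) (zs j))]
    have h1 : Tendsto (fun j => c⁻¹ *
        ‖(Submodule.orthogonalProjectionOnto K (gradient h (Lp (zs j) + w0)) : E n)‖) atTop atTop :=
      hPj.const_mul_atTop (inv_pos.2 hcpos)
    refine tendsto_atTop_mono (fun j => ?_) h1
    have h2 := hgl j
    calc c⁻¹ * ‖(Submodule.orthogonalProjectionOnto K (gradient h (Lp (zs j) + w0)) : E n)‖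
        ≤ c⁻¹ * (c * ‖gradient (fun z : E (n - m) => h (Lp z + w0)) (zs j)‖) :=
          mul_le_mul_of_nonneg_left h2 (inv_nonneg.2 hcpos.le)
      _ = ‖gradient (fun z : E (n - m) => h (Lp z + w0)) (zs j)‖ := by
          field_simp
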